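/- Let $P$ and $Q$ be probability distributions on a finite set $\mathcal{X}$ with $Q(x)>0$ whenever $P(x)>0$. For $\varepsilon \in (0,1)$ and $\alpha \in (1,2]$, the smooth max relative entropy satisfies $D_{\max}^{\varepsilon}(P\|Q) \leq D_{\alpha}(P\|Q) + \frac{1}{\alpha-1}\log\frac{1}{1-\sqrt{1-\varepsilon^2}}$, where $D_{\alpha}(P\|Q) = \frac{1}{\alpha-1}\log \sum_x P(x)^{\alpha}Q(x)^{1-\alpha}$. -/

import Mathlib

/-- Classical max relative entropy `D_max(P‖Q) = log₂ max_{x : P x > 0} P x / Q x`. -/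
noncomputable def DmaxC {X : Type*} [Fintype X] (P Q : X → ℝ) : ℝ :=
  Real.logb 2 (sSup {r : ℝ | ∃ x, 0 < P x ∧ r = P x / Q x})

/-- Generalized fidelity of subnormalized distributions. -/
noncomputable def gFidC {X : Type*} [Fintype X] (P P' : X → ℝ) : ℝ :=
  (∑ x, Real.sqrt (P x * P' x)) +
    Real.sqrt ((1 - ∑ x, P x) * (1 - ∑ x, P' x))

/-- Purified distance between subnormalized distributions. -/
noncomputable def pDistC {X : Type*} [Fintype X] (P P' : X → ℝ) : ℝ :=
  Real.sqrt (1 - (gFidC P P') ^ 2)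

/-- Smooth max relative entropy of classical distributions. -/
noncomputable def DmaxSmoothC {X : Type*} [Fintype X] (ε : ℝ) (P Q : X → ℝ) : ℝ :=
  sInf {r : ℝ | ∃ P' : X → ℝ,
    (∀ x, 0 ≤ P' x) ∧ (∑ x, P' x) ≤ 1 ∧ pDistC P P' ≤ ε ∧ r = DmaxC P' Q}

/-- `D_max^ε(P‖Q) ≤ D_α(P‖Q) + (1/(α-1)) log (1/(1-√(1-ε²)))` for classical
distributions, `ε ∈ (0,1)` and `α ∈ (1,2]`. -/
theorem DmaxSmoothC_le_renyi {X : Type*} [Fintype X] (P Q : X → ℝ)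
    (hP0 : ∀ x, 0 ≤ P x) (hQ0 : ∀ x, 0 ≤ Q x)
    (hP1 : ∑ x, P x = 1) (hQ1 : ∑ x, Q x = 1)
    (hsupp : ∀ x, 0 < P x → 0 < Q x)
    (ε α : ℝ) (hε : 0 < ε) (hε1 : ε < 1) (hα : 1 < α) (hα2 : α ≤ 2) :
    DmaxSmoothC ε P Q ≤
      (1 / (α - 1)) * Real.logb 2
          (∑ x ∈ Finset.univ.filter (fun x => 0 < P x), P x ^ α * Q x ^ (1 - α))
        + (1 / (α - 1)) * Real.logb 2 (1 / (1 - Real.sqrt (1 - ε ^ 2))) := by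
  classical
  set c : ℝ := Real.sqrt (1 - ε ^ 2) with hc_def
  have hε2 : 0 < 1 - ε ^ 2 := by nlinarith
  have hc0 : 0 < c := Real.sqrt_pos.mpr hε2
  have hcsq : c ^ 2 = 1 - ε ^ 2 := Real.sq_sqrt hε2.le
  have hc1 : c < 1 := by nlinarith
  set δ : ℝ := 1 - c with hδ_def
  have hδ0 : 0 < δ := by simp only [hδ_def]; linarith
  have hδ1 : δ < 1 := by simp only [hδ_def]; linarith
  set S : ℝ := ∑ x ∈ Finset.univ.filter (fun x => 0 < P x), P x ^ α * Q x ^ (1 - α)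
    with hS_def
  have hexP : ∃ x, 0 < P x := by
    by_contra h
    push_neg at h
    have : (∑ x, P x) ≤ 0 := Finset.sum_nonpos fun x _ => h x
    rw [hP1] at this; linarith
  obtain ⟨x0, hx0⟩ := hexP
  have hS0 : 0 < S := by
    refine Finset.sum_pos ?_ ⟨x0, by simp [hx0]⟩
    intro x hx
    have hPx := (Finset.mem_filter.mp hx).2
    exact mul_pos (Real.rpow_pos_of_pos hPx _) (Real.rpow_pos_of_pos (hsupp x hPx) _)
  have hα1 : 0 < α - 1 := by linarith
  set t : ℝ := (S / δ) ^ (1 / (α - 1)) with ht_def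
  have hSδ : 0 < S / δ := div_pos hS0 hδ0
  have ht0 : 0 < t := Real.rpow_pos_of_pos hSδ _
  have htS : t ^ (1 - α) * S = δ := by
    have h1 : t ^ (1 - α) = (S / δ) ^ ((1 / (α - 1)) * (1 - α)) := by
      rw [ht_def, ← Real.rpow_mul hSδ.le]
    have h2 : (1 / (α - 1)) * (1 - α) = -1 := by
      field_simp
      ring
    rw [h1, h2, Real.rpow_neg_one]
    field_simp
  set P' : X → ℝ := fun x => if P x ≤ t * Q x then P x else 0 with hP'_def
  have hP'0 : ∀ x, 0 ≤ P' x := by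
    intro x; by_cases h : P x ≤ t * Q x <;> simp [hP'_def, h, hP0 x]
  have hP'leP : ∀ x, P' x ≤ P x := by
    intro x; by_cases h : P x ≤ t * Q x <;> simp [hP'_def, h, hP0 x]
  have hsum'le : (∑ x, P' x) ≤ 1 := by
    rw [← hP1]; exact Finset.sum_le_sum fun x _ => hP'leP x
  have hdiff : ∀ x, P x - P' x ≤ t ^ (1 - α) * (P x ^ α * Q x ^ (1 - α)) := by
    intro x
    by_cases h : P x ≤ t * Q x
    · have : P' x = P x := if_pos h
      rw [this, sub_self]
      exact mul_nonneg (Real.rpow_nonneg ht0.le _)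
        (mul_nonneg (Real.rpow_nonneg (hP0 x) _) (Real.rpow_nonneg (hQ0 x) _))
    · push_neg at h
      have hPx : 0 < P x := lt_of_le_of_lt (mul_nonneg ht0.le (hQ0 x)) h
      have hQx : 0 < Q x := hsupp x hPx
      have htQ : 0 < t * Q x := mul_pos ht0 hQx
      have key : P x ^ (1 - α) ≤ (t * Q x) ^ (1 - α) :=
        Real.rpow_le_rpow_of_nonpos htQ h.le (by linarith)
      have hP'x : P' x = 0 := if_neg (not_le.mpr h)
      rw [hP'x, sub_zero]
      have hαsum : α + (1 - α) = 1 := by ring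
      calc P x = P x ^ α * P x ^ (1 - α) := by
            rw [← Real.rpow_add hPx, hαsum, Real.rpow_one]
        _ ≤ P x ^ α * (t * Q x) ^ (1 - α) :=
            mul_le_mul_of_nonneg_left key (Real.rpow_nonneg (hP0 x) _)
        _ = t ^ (1 - α) * (P x ^ α * Q x ^ (1 - α)) := by
            rw [Real.mul_rpow ht0.le (hQ0 x)]; ring
  have hmass : 1 - (∑ x, P' x) ≤ δ := by
    have h1 : 1 - (∑ x, P' x) = ∑ x, (P x - P' x) := by
      rw [Finset.sum_sub_distrib, hP1]
    have h2 : (∑ x, (P x - P' x)) ≤ ∑ x, t ^ (1 - α) * (P x ^ α * Q x ^ (1 - α)) :=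
      Finset.sum_le_sum fun x _ => hdiff x
    have h4 : (∑ x, P x ^ α * Q x ^ (1 - α)) = S := by
      rw [hS_def]
      refine (Finset.sum_subset (Finset.filter_subset _ _) ?_).symm
      intro x _ hx
      have : ¬ 0 < P x := by simpa using hx
      have hPx : P x = 0 := le_antisymm (not_lt.mp this) (hP0 x)
      rw [hPx, Real.zero_rpow (by linarith), zero_mul]
    have h3 : (∑ x, t ^ (1 - α) * (P x ^ α * Q x ^ (1 - α))) = t ^ (1 - α) * S := by
      rw [← Finset.mul_sum, h4]
    calc 1 - (∑ x, P' x) = ∑ x, (P x - P' x) := h1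
      _ ≤ t ^ (1 - α) * S := by rw [← h3]; exact h2
      _ = δ := htS
  have hsum'ge : c ≤ ∑ x, P' x := by
    have : δ = 1 - c := hδ_def
    linarith
  have hsqrtP' : ∀ x, Real.sqrt (P x * P' x) = P' x := by
    intro x
    by_cases h : P x ≤ t * Q x
    · have : P' x = P x := if_pos h
      rw [this, Real.sqrt_mul_self (hP0 x)]
    · have : P' x = 0 := if_neg h
      rw [this, mul_zero, Real.sqrt_zero]
  have hfid : gFidC P P' = ∑ x, P' x := by
    unfold gFidC
    rw [hP1]
    simp [hsqrtP']
  have hpd : pDistC P P' ≤ ε := by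
    unfold pDistC
    rw [hfid]
    have h1 : 1 - (∑ x, P' x) ^ 2 ≤ ε ^ 2 := by nlinarith
    calc Real.sqrt (1 - (∑ x, P' x) ^ 2) ≤ Real.sqrt (ε ^ 2) := Real.sqrt_le_sqrt h1
      _ = ε := Real.sqrt_sq hε.le
  -- the support of P' is nonempty
  have hexP' : ∃ x, 0 < P' x := by
    by_contra h
    push_neg at h
    have : (∑ x, P' x) ≤ 0 := Finset.sum_nonpos fun x _ => h x
    linarith
  obtain ⟨x1, hx1⟩ := hexP'
  have hPx1 : 0 < P x1 := lt_of_lt_of_le hx1 (hP'leP x1)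
  have hQx1 : 0 < Q x1 := hsupp x1 hPx1
  -- Dmax of P' is at most log₂ t
  have hTub : ∀ r ∈ {r : ℝ | ∃ x, 0 < P' x ∧ r = P' x / Q x}, r ≤ t := by
    rintro r ⟨x, hx, rfl⟩
    have hcond : P x ≤ t * Q x := by
      by_contra h
      have : P' x = 0 := if_neg h
      rw [this] at hx; exact lt_irrefl 0 hx
    have hP'eq : P' x = P x := if_pos hcond
    have hPx : 0 < P x := hP'eq ▸ hx
    have hQx : 0 < Q x := hsupp x hPx
    rw [hP'eq, div_le_iff₀ hQx]
    exact hcond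
  have hDmaxle : DmaxC P' Q ≤ Real.logb 2 t := by
    unfold DmaxC
    have hmem1 : P' x1 / Q x1 ∈ {r : ℝ | ∃ x, 0 < P' x ∧ r = P' x / Q x} := ⟨x1, hx1, rfl⟩
    have hne : Set.Nonempty {r : ℝ | ∃ x, 0 < P' x ∧ r = P' x / Q x} := ⟨_, hmem1⟩
    have hbdd : BddAbove {r : ℝ | ∃ x, 0 < P' x ∧ r = P' x / Q x} := ⟨t, hTub⟩
    have hsup_le : sSup {r : ℝ | ∃ x, 0 < P' x ∧ r = P' x / Q x} ≤ t := csSup_le hne hTub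
    have hsup_pos : 0 < sSup {r : ℝ | ∃ x, 0 < P' x ∧ r = P' x / Q x} :=
      lt_of_lt_of_le (div_pos hx1 hQx1) (le_csSup hbdd hmem1)
    exact Real.logb_le_logb_of_le one_lt_two hsup_pos hsup_le
  -- the smoothing set is bounded below
  have hBdd : BddBelow {r : ℝ | ∃ P'' : X → ℝ,
      (∀ x, 0 ≤ P'' x) ∧ (∑ x, P'' x) ≤ 1 ∧ pDistC P P'' ≤ ε ∧ r = DmaxC P'' Q} := by
    refine ⟨Real.logb 2 (c ^ 2), ?_⟩
    rintro r ⟨P'', h0, hs1, hpd'', rfl⟩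
    have hF0 : 0 ≤ gFidC P P'' :=
      add_nonneg (Finset.sum_nonneg fun x _ => Real.sqrt_nonneg _) (Real.sqrt_nonneg _)
    have hF2 : 1 - ε ^ 2 ≤ (gFidC P P'') ^ 2 := by
      by_contra h
      push_neg at h
      have hlt : Real.sqrt (ε ^ 2) < Real.sqrt (1 - (gFidC P P'') ^ 2) :=
        Real.sqrt_lt_sqrt (sq_nonneg ε) (by linarith)
      rw [Real.sqrt_sq hε.le] at hlt
      have : pDistC P P'' = Real.sqrt (1 - (gFidC P P'') ^ 2) := rfl
      rw [this] at hpd''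
      linarith
    have hcF : c ≤ gFidC P P'' := by
      calc c = Real.sqrt (1 - ε ^ 2) := hc_def
        _ ≤ Real.sqrt ((gFidC P P'') ^ 2) := Real.sqrt_le_sqrt hF2
        _ = gFidC P P'' := Real.sqrt_sq hF0
    have hFeq : gFidC P P'' = ∑ x, Real.sqrt (P x * P'' x) := by
      unfold gFidC
      rw [hP1]
      simp
    rw [hFeq] at hcF
    have hex2 : ∃ x, 0 < P x ∧ 0 < P'' x := by
      by_contra h
      push_neg at h
      have hz : ∀ x, Real.sqrt (P x * P'' x) = 0 := by
        intro x
        rcases lt_or_ge 0 (P x) with hp | hp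
        · have hp'' : P'' x = 0 := le_antisymm (h x hp) (h0 x)
          rw [hp'', mul_zero, Real.sqrt_zero]
        · have hp0 : P x = 0 := le_antisymm hp (hP0 x)
          rw [hp0, zero_mul, Real.sqrt_zero]
      rw [Finset.sum_congr rfl fun x _ => hz x] at hcF
      simp at hcF
      linarith
    obtain ⟨x2, hPx2, hP''x2⟩ := hex2
    have hQx2 : 0 < Q x2 := hsupp x2 hPx2
    have hT2bdd : BddAbove {r : ℝ | ∃ x, 0 < P'' x ∧ r = P'' x / Q x} := by
      apply Set.Finite.bddAbove
      apply Set.Finite.subset (Set.finite_range fun x => P'' x / Q x)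
      rintro r ⟨x, _, rfl⟩
      exact ⟨x, rfl⟩
    have hrmem : P'' x2 / Q x2 ∈ {r : ℝ | ∃ x, 0 < P'' x ∧ r = P'' x / Q x} :=
      ⟨x2, hP''x2, rfl⟩
    set R : ℝ := sSup {r : ℝ | ∃ x, 0 < P'' x ∧ r = P'' x / Q x} with hR_def
    have hr0 : 0 < R :=
      lt_of_lt_of_le (div_pos hP''x2 hQx2) (le_csSup hT2bdd hrmem)
    have hterm : ∀ x, Real.sqrt (P x * P'' x) ≤ Real.sqrt R * Real.sqrt (P x * Q x) := by
      intro x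
      rcases eq_or_lt_of_le (h0 x) with h' | h'
      · rw [← h', mul_zero, Real.sqrt_zero]
        exact mul_nonneg (Real.sqrt_nonneg _) (Real.sqrt_nonneg _)
      · rcases eq_or_lt_of_le (hP0 x) with hp | hp
        · rw [← hp, zero_mul, Real.sqrt_zero]
          exact mul_nonneg (Real.sqrt_nonneg _) (Real.sqrt_nonneg _)
        · have hQx : 0 < Q x := hsupp x hp
          have hle : P'' x / Q x ≤ R := le_csSup hT2bdd ⟨x, h', rfl⟩
          have hPP : P'' x ≤ R * Q x := (div_le_iff₀ hQx).mp hle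
          calc Real.sqrt (P x * P'' x) ≤ Real.sqrt (P x * (R * Q x)) :=
                Real.sqrt_le_sqrt (mul_le_mul_of_nonneg_left hPP hp.le)
            _ = Real.sqrt (R * (P x * Q x)) := by rw [mul_left_comm]
            _ = Real.sqrt R * Real.sqrt (P x * Q x) := Real.sqrt_mul hr0.le _
    have hCS : (∑ x, Real.sqrt (P x * Q x)) ≤ 1 := by
      have h1 : (∑ x, Real.sqrt (P x * Q x)) = ∑ x, Real.sqrt (P x) * Real.sqrt (Q x) :=
        Finset.sum_congr rfl fun x _ => Real.sqrt_mul (hP0 x) _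
      calc (∑ x, Real.sqrt (P x * Q x))
          = ∑ x, Real.sqrt (P x) * Real.sqrt (Q x) := h1
        _ ≤ Real.sqrt (∑ x, P x) * Real.sqrt (∑ x, Q x) :=
            Real.sum_sqrt_mul_sqrt_le _ hP0 hQ0
        _ = 1 := by rw [hP1, hQ1, Real.sqrt_one, mul_one]
    have hcr : c ≤ Real.sqrt R := by
      calc c ≤ ∑ x, Real.sqrt (P x * P'' x) := hcF
        _ ≤ ∑ x, Real.sqrt R * Real.sqrt (P x * Q x) := Finset.sum_le_sum fun x _ => hterm x
        _ = Real.sqrt R * ∑ x, Real.sqrt (P x * Q x) := by rw [Finset.mul_sum]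
        _ ≤ Real.sqrt R * 1 := mul_le_mul_of_nonneg_left hCS (Real.sqrt_nonneg _)
        _ = Real.sqrt R := mul_one _
    have hc2r : c ^ 2 ≤ R := by
      calc c ^ 2 = c * c := sq c
        _ ≤ Real.sqrt R * Real.sqrt R := mul_self_le_mul_self hc0.le hcr
        _ = R := Real.mul_self_sqrt hr0.le
    show Real.logb 2 (c ^ 2) ≤ DmaxC P'' Q
    unfold DmaxC
    exact Real.logb_le_logb_of_le one_lt_two (pow_pos hc0 2) hc2r
  have hmem : DmaxC P' Q ∈ {r : ℝ | ∃ P'' : X → ℝ,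
      (∀ x, 0 ≤ P'' x) ∧ (∑ x, P'' x) ≤ 1 ∧ pDistC P P'' ≤ ε ∧ r = DmaxC P'' Q} :=
    ⟨P', hP'0, hsum'le, hpd, rfl⟩
  have hstep : DmaxSmoothC ε P Q ≤ DmaxC P' Q := csInf_le hBdd hmem
  have hRHS : Real.logb 2 t =
      (1 / (α - 1)) * Real.logb 2 S + (1 / (α - 1)) * Real.logb 2 (1 / δ) := by
    rw [ht_def]
    unfold Real.logb
    rw [Real.log_rpow hSδ, Real.log_div hS0.ne' hδ0.ne', one_div δ, Real.log_inv]
    ring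
  calc DmaxSmoothC ε P Q ≤ DmaxC P' Q := hstep
    _ ≤ Real.logb 2 t := hDmaxle
    _ = (1 / (α - 1)) * Real.logb 2 S + (1 / (α - 1)) * Real.logb 2 (1 / δ) := hRHS
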